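/- Let X ∈ ℝ^{n×d}, y ∈ ℝⁿ, λ > 0, and suppose β̂ is a Lasso solution with active set A = {i ∈ [d] : |X_iᵀ(y − Xβ̂)| = λ} and equicorrelation signs η = sign(Xᵀ(y − Xβ̂)). Then the restriction of the KKT conditions to A gives X_Aᵀ(y − X_A β̂_A) = λη_A, and consequently η_A lies in the row space of X_A and any Lasso solution satisfies β̂_A = X_A⁺(y − λ(X_A⁺)ᵀη_A) + b for some b ∈ null(X_A), with β̂ vanishing outside A. -/

import Mathlib

open Matrix

/-- The Lasso cost function `β ↦ (1/2)‖y − Xβ‖₂² + λ‖β‖₁`. -/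
noncomputable def lassoCost {n d : ℕ} (X : Matrix (Fin n) (Fin d) ℝ) (y : Fin n → ℝ)
    (lam : ℝ) (β : Fin d → ℝ) : ℝ :=
  (1 / 2) * ∑ i, (y i - X.mulVec β i) ^ 2 + lam * ∑ j, |β j|

/-- `P` is the Moore–Penrose pseudoinverse of `M`. -/
def IsMoorePenrose {m k : Type*} [Fintype m] [Fintype k]
    (M : Matrix m k ℝ) (P : Matrix k m ℝ) : Prop :=
  M * P * M = M ∧ P * M * P = P ∧ (M * P)ᵀ = M * P ∧ (P * M)ᵀ = P * M

lemma lasso_perturb {n d : ℕ} (X : Matrix (Fin n) (Fin d) ℝ) (y : Fin n → ℝ)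
    (lam : ℝ) (βh : Fin d → ℝ)
    (hmin : ∀ β, lassoCost X y lam βh ≤ lassoCost X y lam β) (j : Fin d) (t : ℝ) :
    0 ≤ -(t * ∑ r, X r j * (y r - X.mulVec βh r)) + t^2/2 * ∑ r, (X r j)^2
      + lam * (|βh j + t| - |βh j|) := by
  have h := hmin (Function.update βh j (βh j + t))
  simp only [lassoCost] at h
  have hmv : ∀ i, X.mulVec (Function.update βh j (βh j + t)) i = X.mulVec βh i + t * X i j := by
    intro i
    simp only [Matrix.mulVec, dotProduct]
    have hpt : ∀ k, X i k * Function.update βh j (βh j + t) k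
        = X i k * βh k + (if k = j then X i k * t else 0) := by
      intro k
      by_cases hk : k = j
      · subst hk; rw [Function.update_self, if_pos rfl]; ring
      · rw [Function.update_of_ne hk, if_neg hk, add_zero]
    rw [Finset.sum_congr rfl (fun k _ => hpt k), Finset.sum_add_distrib,
      Finset.sum_ite_eq' Finset.univ j (fun k => X i k * t)]
    simp [mul_comm]
  have habs : ∑ k, |Function.update βh j (βh j + t) k|
      = ∑ k, |βh k| + (|βh j + t| - |βh j|) := by
    have hpt : ∀ k, |Function.update βh j (βh j + t) k|
        = |βh k| + (if k = j then |βh j + t| - |βh j| else 0) := by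
      intro k
      by_cases hk : k = j
      · subst hk; rw [Function.update_self, if_pos rfl]; ring
      · rw [Function.update_of_ne hk, if_neg hk, add_zero]
    rw [Finset.sum_congr rfl (fun k _ => hpt k), Finset.sum_add_distrib,
      Finset.sum_ite_eq' Finset.univ j]
    simp
  rw [habs] at h
  have hsq : ∑ i, (y i - X.mulVec (Function.update βh j (βh j + t)) i) ^ 2
      = ∑ i, (y i - X.mulVec βh i) ^ 2
        - 2 * t * ∑ r, X r j * (y r - X.mulVec βh r) + t^2 * ∑ r, (X r j)^2 := by
    calc ∑ i, (y i - X.mulVec (Function.update βh j (βh j + t)) i) ^ 2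
        = ∑ i, ((y i - X.mulVec βh i)^2
            - 2*t*(X i j * (y i - X.mulVec βh i)) + t^2 * (X i j)^2) :=
          Finset.sum_congr rfl (fun i _ => by rw [hmv i]; ring)
      _ = _ := by
          rw [Finset.sum_add_distrib, Finset.sum_sub_distrib, ← Finset.mul_sum, ← Finset.mul_sum]
  rw [hsq] at h
  linarith

lemma lasso_core (D s B : ℝ) (hs : 0 ≤ s) (hB : 0 < B)
    (h : ∀ t, |t| < B → 0 ≤ -(t*D) + t^2/2*s) : D = 0 := by
  by_contra hD
  have hD2 : 0 < D^2 := by positivity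
  set ε := min (B / (|D|+1)) (1/(s+1)) with hε
  have hε0 : 0 < ε := lt_min (by positivity) (by positivity)
  have habs : 0 < |D| := abs_pos.mpr hD
  have htB : |D*ε| < B := by
    rw [abs_mul, abs_of_pos hε0]
    calc |D| * ε ≤ |D| * (B/(|D|+1)) :=
          mul_le_mul_of_nonneg_left (min_le_left _ _) (abs_nonneg D)
      _ < B := by
          rw [div_eq_mul_inv, ← mul_assoc]
          rw [show |D| * B * (|D|+1)⁻¹ < B ↔ |D| * B * (|D|+1)⁻¹ * (|D|+1) < B * (|D|+1) from
            (mul_lt_mul_iff_of_pos_right (by positivity)).symm]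
          field_simp
          nlinarith
  have hkey := h (D*ε) htB
  have hεs : ε * (s+1) ≤ 1 := by
    calc ε*(s+1) ≤ (1/(s+1))*(s+1) :=
          mul_le_mul_of_nonneg_right (min_le_right _ _) (by linarith)
      _ = 1 := by field_simp
  nlinarith [mul_pos (mul_pos hD2 hε0) hε0, mul_pos hD2 hε0]

lemma lasso_kkt_abs {n d : ℕ} (X : Matrix (Fin n) (Fin d) ℝ) (y : Fin n → ℝ)
    (lam : ℝ) (hlam : 0 < lam) (βh : Fin d → ℝ)
    (hmin : ∀ β, lassoCost X y lam βh ≤ lassoCost X y lam β) (j : Fin d)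
    (hj : βh j ≠ 0) :
    |∑ r, X r j * (y r - X.mulVec βh r)| = lam := by
  set g := ∑ r, X r j * (y r - X.mulVec βh r) with hg
  set s := ∑ r, (X r j)^2 with hs
  have hs0 : 0 ≤ s := Finset.sum_nonneg fun r _ => sq_nonneg _
  have key : ∀ t, 0 ≤ -(t*g) + t^2/2*s + lam*(|βh j + t| - |βh j|) :=
    fun t => lasso_perturb X y lam βh hmin j t
  rcases hj.lt_or_gt with hneg | hpos
  · have hc : g + lam = 0 := by
      apply lasso_core (g + lam) s (-βh j) hs0 (by linarith)
      intro t ht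
      rw [abs_lt] at ht
      have h1 : |βh j + t| = -(βh j + t) := abs_of_neg (by linarith)
      have h2 : |βh j| = -(βh j) := abs_of_neg hneg
      have := key t
      rw [h1, h2] at this
      nlinarith
    have : g = -lam := by linarith
    rw [this, abs_neg, abs_of_pos hlam]
  · have hc : g - lam = 0 := by
      apply lasso_core (g - lam) s (βh j) hs0 hpos
      intro t ht
      rw [abs_lt] at ht
      have h1 : |βh j + t| = βh j + t := abs_of_pos (by linarith)
      have h2 : |βh j| = βh j := abs_of_pos hpos
      have := key t
      rw [h1, h2] at this
      nlinarith
    have : g = lam := by linarith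
    rw [this, abs_of_pos hlam]

/-- Structure of Lasso solutions: the KKT conditions restricted to the active set
`A = {i : |X_iᵀ(y − Xβ̂)| = λ}` give `X_Aᵀ(y − X_A β̂_A) = λ η_A`; consequently `η_A`
lies in the row space of `X_A`, any Lasso solution satisfies
`β̂_A = X_A⁺(y − λ(X_A⁺)ᵀη_A) + b` for some `b ∈ null(X_A)`, and `β̂` vanishes
outside `A`. -/
theorem lasso_solution_structure {n d : ℕ} (X : Matrix (Fin n) (Fin d) ℝ)
    (y : Fin n → ℝ) (lam : ℝ) (hlam : 0 < lam) (βh : Fin d → ℝ)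
    (hmin : ∀ β : Fin d → ℝ, lassoCost X y lam βh ≤ lassoCost X y lam β)
    (A : Finset (Fin d))
    (hA : ∀ i, i ∈ A ↔ |∑ r, X r i * (y r - X.mulVec βh r)| = lam)
    (η : Fin d → ℝ)
    (hη : ∀ i, η i = Real.sign (∑ r, X r i * (y r - X.mulVec βh r)))
    (XA : Matrix (Fin n) {i // i ∈ A} ℝ) (hXA : ∀ r a, XA r a = X r a.1)
    (P : Matrix {i // i ∈ A} (Fin n) ℝ) (hP : IsMoorePenrose XA P) :
    (XAᵀ.mulVec (fun r => y r - XA.mulVec (fun a => βh a.1) r) =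
        fun a : {i // i ∈ A} => lam * η a.1) ∧
    (∃ c : Fin n → ℝ, (fun a : {i // i ∈ A} => η a.1) = XAᵀ.mulVec c) ∧
    (∃ b : {i // i ∈ A} → ℝ, XA.mulVec b = 0 ∧
      (fun a : {i // i ∈ A} => βh a.1) =
        fun a => P.mulVec (fun r => y r - lam * Pᵀ.mulVec (fun a' : {i // i ∈ A} => η a'.1) r) a
          + b a) ∧
    (∀ j, j ∉ A → βh j = 0) := by
  have h4 : ∀ j, j ∉ A → βh j = 0 := by
    intro j hjA
    by_contra hj
    exact hjA ((hA j).mpr (lasso_kkt_abs X y lam hlam βh hmin j hj))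
  have hmve : X.mulVec βh = XA.mulVec (fun a => βh a.1) := by
    funext i
    simp only [Matrix.mulVec, dotProduct]
    calc ∑ j, X i j * βh j = ∑ j ∈ A, X i j * βh j :=
        (Finset.sum_subset A.subset_univ (fun j _ hj => by rw [h4 j hj, mul_zero])).symm
      _ = ∑ a ∈ A.attach, X i a.1 * βh a.1 := (Finset.sum_attach A _).symm
      _ = ∑ a, XA i a * βh a.1 := by simp [hXA]
  have h1 : XAᵀ.mulVec (fun r => y r - XA.mulVec (fun a => βh a.1) r) =
      fun a : {i // i ∈ A} => lam * η a.1 := by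
    funext a
    have hga : |∑ r, X r a.1 * (y r - X.mulVec βh r)| = lam := (hA a.1).mp a.2
    have heq : XAᵀ.mulVec (fun r => y r - XA.mulVec (fun a => βh a.1) r) a
        = ∑ r, X r a.1 * (y r - X.mulVec βh r) := by
      rw [← hmve]
      simp only [Matrix.mulVec, dotProduct, Matrix.transpose_apply, hXA]
    rw [heq, hη]
    set g := ∑ r, X r a.1 * (y r - X.mulVec βh r)
    rcases lt_trichotomy g 0 with h|h|h
    · rw [Real.sign_of_neg h]; rw [abs_of_neg h] at hga; linarith
    · exfalso; rw [h, abs_zero] at hga; linarith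
    · rw [Real.sign_of_pos h]; rw [abs_of_pos h] at hga; linarith
  refine ⟨h1, ?_, ?_, h4⟩
  · refine ⟨lam⁻¹ • (fun r => y r - XA.mulVec (fun a => βh a.1) r), ?_⟩
    rw [Matrix.mulVec_smul, h1]
    funext a
    simp only [Pi.smul_apply, smul_eq_mul]
    rw [← mul_assoc, inv_mul_cancel₀ hlam.ne', one_mul]
  · set βA := fun a : {i // i ∈ A} => βh a.1 with hβA
    set ηA := fun a : {i // i ∈ A} => η a.1 with hηA
    set w := fun r => y r - lam * Pᵀ.mulVec ηA r with hw
    refine ⟨βA - P.mulVec w, ?_, by funext a; simp⟩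
    rw [Matrix.mulVec_sub, Matrix.mulVec_mulVec, sub_eq_zero]
    have hw' : w = y - lam • Pᵀ.mulVec ηA := by funext r; simp [hw, smul_eq_mul]
    have hPtMt : Pᵀ * XAᵀ = XA * P := by rw [← Matrix.transpose_mul]; exact hP.2.2.1
    have hresid : XAᵀ.mulVec (y - XA.mulVec βA) = lam • ηA := by
      funext a
      have := congrFun h1 a
      exact this
    have hproj : XA * P * Pᵀ * XAᵀ = XA * P := by
      calc XA * P * Pᵀ * XAᵀ = (XA * P) * (Pᵀ * XAᵀ) := Matrix.mul_assoc _ _ _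
        _ = (XA * P) * (XA * P) := by rw [hPtMt]
        _ = XA * (P * XA * P) := by rw [Matrix.mul_assoc, ← Matrix.mul_assoc P XA P]
        _ = XA * P := by rw [hP.2.1]
    have e3 : (XA * P).mulVec (y - XA.mulVec βA) = lam • (XA * P * Pᵀ).mulVec ηA := by
      have key : (XA * P * Pᵀ).mulVec (XAᵀ.mulVec (y - XA.mulVec βA))
          = (XA * P).mulVec (y - XA.mulVec βA) := by
        rw [Matrix.mulVec_mulVec, hproj]
      rw [← key, hresid, Matrix.mulVec_smul]
    calc XA.mulVec βA = ((XA * P) * XA).mulVec βA := by rw [hP.1]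
      _ = (XA * P).mulVec (XA.mulVec βA) := (Matrix.mulVec_mulVec _ _ _).symm
      _ = (XA * P).mulVec (y - (y - XA.mulVec βA)) := by rw [sub_sub_cancel]
      _ = (XA * P).mulVec y - (XA * P).mulVec (y - XA.mulVec βA) := Matrix.mulVec_sub _ _ _
      _ = (XA * P).mulVec y - lam • (XA * P * Pᵀ).mulVec ηA := by rw [e3]
      _ = (XA * P).mulVec w := by
          rw [hw', Matrix.mulVec_sub, Matrix.mulVec_smul, Matrix.mulVec_mulVec]
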